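/- arXiv:1309.2167 — 3 statements merged into one kernel-verified Lean document; each statement's English description precedes it below -/
import Mathlib

section
/- For every integer k, the gamma function Γ is injective on the set D_k = { z ∈ ℂ₊ : −(k+1)π < Im L(z) < −kπ }. -/
open Complex

open Filter Topology

lemma norm_k1 (k : ℕ) : ‖((k:ℂ) + 1)‖ = (k:ℝ) + 1 := by
  rw [show ((k:ℂ)+1) = ((k+1:ℕ):ℂ) by push_cast; ring, Complex.norm_natCast]
  push_cast; ring

lemma summable_lgTerm (z : ℂ) :
    Summable (fun k : ℕ => Complex.log (1 + z / (k + 1)) - z / (k + 1)) := by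
  have hsum : Summable (fun k : ℕ => ‖z‖^2 * (((k:ℝ) + 1)^2)⁻¹) := by
    apply Summable.mul_left
    have := (Real.summable_one_div_nat_pow (p := 2)).mpr one_lt_two
    have := (summable_nat_add_iff 1).mpr this
    simpa [one_div] using this
  apply Summable.of_norm_bounded_eventually hsum
  rw [Nat.cofinite_eq_atTop]
  filter_upwards [eventually_ge_atTop (Nat.ceil (2 * ‖z‖))] with k hk
  have hk1 : (0:ℝ) < (k:ℝ) + 1 := by positivity
  have hle : ‖z / (k + 1)‖ ≤ 1/2 := by
    rw [norm_div, norm_k1, div_le_iff₀ hk1]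
    have : 2 * ‖z‖ ≤ (k:ℝ) := le_trans (Nat.le_ceil _) (by exact_mod_cast hk)
    nlinarith [norm_nonneg z]
  have hlt : ‖z / (k + 1)‖ < 1 := lt_of_le_of_lt hle (by norm_num)
  have h2 : (1 - ‖z / (k+1)‖)⁻¹ ≤ 2 := by
    rw [inv_le_comm₀ (by linarith) (by norm_num)]; linarith
  calc ‖Complex.log (1 + z / (k + 1)) - z / (k + 1)‖
      ≤ ‖z / (k+1)‖^2 * (1 - ‖z / (k+1)‖)⁻¹ / 2 := Complex.norm_log_one_add_sub_self_le hlt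
    _ ≤ ‖z / (k+1)‖^2 * 2 / 2 := by
        have := sq_nonneg ‖z / (k+1)‖
        nlinarith
    _ = ‖z / (k+1)‖^2 := by ring
    _ ≤ ‖z‖^2 * (((k:ℝ) + 1)^2)⁻¹ := by
        rw [norm_div, div_pow, norm_k1, div_eq_mul_inv]

/-- The holomorphic branch `L` of `log Γ` on `ℂ ∖ (−∞,0]`:
`L(z) = −γz − Log z − ∑_{k=1}^∞ (Log(1 + z/k) − z/k)`. -/
noncomputable def logGamma (z : ℂ) : ℂ :=
  -(Real.eulerMascheroniConstant : ℂ) * z - Complex.log z -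
    ∑' k : ℕ, (Complex.log (1 + z / (k + 1)) - z / (k + 1))

lemma one_add_div_ne_zero {z : ℂ} (hz : z.im ≠ 0) (k : ℕ) : (1 : ℂ) + z / (k + 1) ≠ 0 := by
  intro h
  have him : ((1:ℂ) + z / (k+1)).im = z.im / ((k:ℝ)+1) := by
    rw [show ((k:ℂ)+1) = (((k:ℝ)+1 : ℝ) : ℂ) by push_cast; ring, Complex.add_im,
      Complex.div_ofReal_im]
    simp
  rw [h] at him
  simp only [Complex.zero_im] at him
  have hk1 : ((k:ℝ)+1) ≠ 0 := by positivity
  exact hz (by rw [eq_comm, div_eq_zero_iff] at him; tauto)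

lemma exp_logGamma {z : ℂ} (hz : z.im ≠ 0) : Complex.exp (logGamma z) = Complex.Gamma z := by
  classical
  have h0 : z ≠ 0 := fun h => by simp [h] at hz
  set γ : ℝ := Real.eulerMascheroniConstant with hγ
  set f : ℕ → ℂ := fun k => Complex.log (1 + z / (k + 1)) - z / (k + 1) with hf
  have hsum : Summable f := summable_lgTerm z
  have htend := hsum.hasSum.tendsto_sum_nat
  have hE : Tendsto (fun n => Complex.exp (-(γ:ℂ)*z - Complex.log z - ∑ k ∈ Finset.range n, f k))
      atTop (𝓝 (Complex.exp (logGamma z))) := by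
    refine (Complex.continuous_exp.tendsto _).comp ?_
    rw [logGamma]
    exact tendsto_const_nhds.sub htend
  have key : ∀ n : ℕ, n ≠ 0 →
      Complex.exp (-(γ:ℂ)*z - Complex.log z - ∑ k ∈ Finset.range n, f k)
        = Complex.GammaSeq z n *
            Complex.exp (z * ((((harmonic n : ℝ) - Real.log n - γ : ℝ)) : ℂ)) := by
    intro n hn
    have hne : ((n:ℂ)) ≠ 0 := Nat.cast_ne_zero.mpr hn
    have hfac : ((n.factorial : ℕ) : ℂ) ≠ 0 := Nat.cast_ne_zero.mpr (Nat.factorial_ne_zero n)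
    have hQ : (∏ k ∈ Finset.range n, ((1:ℂ) + z/(k+1))) ≠ 0 :=
      Finset.prod_ne_zero_iff.mpr fun k _ => one_add_div_ne_zero hz k
    -- harmonic cast
    have hH : (((harmonic n : ℝ)) : ℂ) = ∑ k ∈ Finset.range n, ((k:ℂ)+1)⁻¹ := by
      rw [harmonic]
      push_cast
      rfl
    -- product identity
    have hP : (∏ j ∈ Finset.range (n+1), (z + (j:ℂ)))
        = z * (((n.factorial : ℕ):ℂ) * ∏ k ∈ Finset.range n, ((1:ℂ) + z/(k+1))) := by
      rw [Finset.prod_range_succ']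
      have h1 : ∀ k ∈ Finset.range n, (z + ((k:ℂ)+1)) = ((k:ℂ)+1) * (1 + z/(k+1)) := by
        intro k _
        have : ((k:ℂ)+1) ≠ 0 := by
          intro h
          have := norm_k1 k
          rw [h] at this
          simp at this
          nlinarith [Nat.cast_nonneg (α := ℝ) k]
        field_simp
        ring
      push_cast
      rw [Finset.prod_congr rfl h1, Finset.prod_mul_distrib]
      have h2 : (∏ k ∈ Finset.range n, ((k:ℂ)+1)) = ((n.factorial : ℕ) : ℂ) := by
        rw [← Finset.prod_range_add_one_eq_factorial]
        push_cast
        rfl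
      rw [h2]
      ring
    have hexpf : ∀ k ∈ Finset.range n, Complex.exp (f k)
        = (1 + z/(k+1)) * (Complex.exp (z/(k+1)))⁻¹ := by
      intro k _
      rw [hf]
      rw [Complex.exp_sub, Complex.exp_log (one_add_div_ne_zero hz k)]
      rw [div_eq_mul_inv]
    -- expand both sides
    rw [Complex.exp_sub, Complex.exp_sub, Complex.exp_log h0, Complex.exp_sum,
      Finset.prod_congr rfl hexpf, Finset.prod_mul_distrib, Finset.prod_inv_distrib,
      ← Complex.exp_sum]
    rw [Complex.GammaSeq, Complex.cpow_def_of_ne_zero hne, hP]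
    have hzH : ∑ k ∈ Finset.range n, z/((k:ℂ)+1) = z * ((harmonic n : ℝ) : ℂ) := by
      rw [hH, Finset.mul_sum]
      exact Finset.sum_congr rfl fun k _ => div_eq_mul_inv z _
    have hlog : ((Real.log n : ℝ) : ℂ) = Complex.log (n:ℂ) := Complex.natCast_log
    rw [hzH, Complex.ofReal_sub, Complex.ofReal_sub, hlog]
    rw [show z * (((harmonic n : ℝ):ℂ) - Complex.log (n:ℂ) - (γ:ℂ))
        = z * ((harmonic n : ℝ):ℂ) - Complex.log (n:ℂ) * z - (γ:ℂ) * z by ring]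
    rw [Complex.exp_sub, Complex.exp_sub, neg_mul, Complex.exp_neg]
    field_simp [Complex.exp_ne_zero]
  have hG : Tendsto (fun n : ℕ => Complex.GammaSeq z n *
      Complex.exp (z * ((((harmonic n : ℝ) - Real.log n - γ : ℝ)) : ℂ)))
      atTop (𝓝 (Complex.Gamma z * 1)) := by
    refine (Complex.GammaSeq_tendsto_Gamma z).mul ?_
    have h1 : Tendsto (fun n : ℕ => ((harmonic n : ℝ) - Real.log n - γ)) atTop (𝓝 0) := by
      simpa [hγ] using Real.tendsto_harmonic_sub_log.sub_const γ
    have h2 : Tendsto (fun n : ℕ => ((((harmonic n : ℝ) - Real.log n - γ : ℝ)) : ℂ))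
        atTop (𝓝 0) := by
      rw [show ((0:ℂ)) = ((0:ℝ):ℂ) by norm_num]
      exact (Complex.continuous_ofReal.tendsto 0).comp h1
    have h3 := h2.const_mul z
    rw [mul_zero] at h3
    simpa [Function.comp_def] using (Complex.continuous_exp.tendsto 0).comp h3
  rw [mul_one] at hG
  exact tendsto_nhds_unique (hE.congr' (by filter_upwards [eventually_ne_atTop 0] with n hn using key n hn)) hG

lemma intervalIntegral_im {F : ℝ → ℂ} (h : IntervalIntegrable F MeasureTheory.volume 0 1) :
    (∫ t in (0:ℝ)..1, F t).im = ∫ t in (0:ℝ)..1, (F t).im := by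
  rw [intervalIntegral.integral_of_le zero_le_one, intervalIntegral.integral_of_le zero_le_one,
    ← RCLike.im_eq_complex_im, ← integral_im h.1]

noncomputable def Fterm (k : ℕ) (w : ℂ) : ℂ := Complex.log (1 + w / (k + 1)) - w / (k + 1)

noncomputable def Fterm' (k : ℕ) (w : ℂ) : ℂ :=
  (1 + w / ((k:ℂ) + 1))⁻¹ * ((k:ℂ) + 1)⁻¹ - ((k:ℂ) + 1)⁻¹

lemma one_add_div_im (w : ℂ) (k : ℕ) :
    ((1:ℂ) + w / ((k:ℂ) + 1)).im = w.im / ((k:ℝ) + 1) := by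
  rw [show ((k:ℂ)+1) = (((k:ℝ)+1 : ℝ) : ℂ) by push_cast; ring, Complex.add_im,
    Complex.div_ofReal_im]
  simp

open intervalIntegral MeasureTheory in
lemma logGamma_inj {z₁ z₂ : ℂ} (h1 : 0 < z₁.im) (h2 : 0 < z₂.im)
    (heq : logGamma z₁ = logGamma z₂) : z₁ = z₂ := by
  by_contra hne
  have hD : z₂ - z₁ ≠ 0 := sub_ne_zero.mpr (Ne.symm hne)
  have hpim : ∀ t ∈ Set.Icc (0:ℝ) 1, 0 < (z₁ + t • (z₂ - z₁)).im := by
    intro t ht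
    have he : (z₁ + t • (z₂ - z₁)).im = (1 - t) * z₁.im + t * z₂.im := by
      simp [Complex.add_im, Complex.sub_im]
      ring
    rw [he]
    rcases lt_or_eq_of_le ht.1 with h | h
    · nlinarith [ht.2]
    · rw [← h]; simpa using h1
  have hpne : ∀ t ∈ Set.Icc (0:ℝ) 1, z₁ + t • (z₂ - z₁) ≠ 0 := by
    intro t ht h
    have := hpim t ht
    rw [h] at this
    simp at this
  have hpcont : Continuous (fun t : ℝ => z₁ + t • (z₂ - z₁)) := by fun_prop
  -- the log z part
  have hcont0 : ContinuousOn (fun t : ℝ => (z₁ + t • (z₂ - z₁))⁻¹) (Set.Icc 0 1) :=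
    hpcont.continuousOn.inv₀ hpne
  have hI0 : (z₂ - z₁) * (∫ t in (0:ℝ)..1, (z₁ + t • (z₂ - z₁))⁻¹)
      = Complex.log z₂ - Complex.log z₁ := by
    have := integral_unitInterval_deriv_eq_sub (f := Complex.log)
      (f' := fun w => w⁻¹) (z₀ := z₁) (z₁ := z₂ - z₁) hcont0
      (fun t ht => Complex.hasDerivAt_log
        (Complex.mem_slitPlane_iff.mpr (Or.inr (hpim t ht).ne')))
    rw [add_sub_cancel] at this
    simpa [smul_eq_mul] using this
  have him0 : (∫ t in (0:ℝ)..1, (z₁ + t • (z₂ - z₁))⁻¹).im < 0 := by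
    have hii := hcont0.intervalIntegrable_of_Icc (μ := volume) zero_le_one
    rw [_root_.intervalIntegral_im hii]
    have hpos : (0:ℝ) < ∫ t in (0:ℝ)..1, -((z₁ + t • (z₂ - z₁))⁻¹).im := by
      apply intervalIntegral_pos_of_pos_on
      · have hc : ContinuousOn (fun t : ℝ => -((z₁ + t • (z₂ - z₁))⁻¹).im) (Set.Icc 0 1) :=
          (Complex.continuous_im.comp_continuousOn hcont0).neg
        exact hc.intervalIntegrable_of_Icc zero_le_one
      · intro t ht
        have ht' : t ∈ Set.Icc (0:ℝ) 1 := Set.mem_Icc_of_Ioo ht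
        rw [Complex.inv_im]
        have h1' := hpim t ht'
        have h2' : 0 < Complex.normSq (z₁ + t • (z₂ - z₁)) :=
          Complex.normSq_pos.mpr (hpne t ht')
        rw [neg_div, neg_neg]
        exact div_pos h1' h2'
      · norm_num
    rw [intervalIntegral.integral_neg] at hpos
    linarith
  -- the series part
  have hne1 : ∀ (k : ℕ) (t : ℝ), t ∈ Set.Icc (0:ℝ) 1 →
      (1 : ℂ) + (z₁ + t • (z₂ - z₁)) / ((k:ℂ) + 1) ≠ 0 :=
    fun k t ht => one_add_div_ne_zero (hpim t ht).ne' k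
  have hcontk : ∀ k : ℕ, ContinuousOn (fun t : ℝ => Fterm' k (z₁ + t • (z₂ - z₁)))
      (Set.Icc 0 1) := by
    intro k
    unfold Fterm'
    apply ContinuousOn.sub _ continuousOn_const
    apply ContinuousOn.mul _ continuousOn_const
    exact (continuousOn_const.add (hpcont.continuousOn.div_const _)).inv₀ (hne1 k)
  have hderivk : ∀ (k : ℕ) (w : ℂ), 0 < w.im → HasDerivAt (Fterm k) (Fterm' k w) w := by
    intro k w hw
    have hd1 : HasDerivAt (fun w : ℂ => 1 + w / ((k:ℂ) + 1)) (((k:ℂ) + 1)⁻¹) w := by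
      simpa [one_div] using ((hasDerivAt_id w).div_const ((k:ℂ)+1)).const_add 1
    have hmem : (1 : ℂ) + w / ((k:ℂ) + 1) ∈ Complex.slitPlane := by
      apply Complex.mem_slitPlane_iff.mpr
      right
      rw [one_add_div_im]
      positivity
    have hd2 := (Complex.hasDerivAt_log hmem).comp w hd1
    have hd3 : HasDerivAt (fun w : ℂ => w / ((k:ℂ) + 1)) (((k:ℂ) + 1)⁻¹) w := by
      simpa [one_div] using (hasDerivAt_id w).div_const ((k:ℂ)+1)
    exact hd2.sub hd3
  have hker : ∀ k : ℕ, (z₂ - z₁) * (∫ t in (0:ℝ)..1, Fterm' k (z₁ + t • (z₂ - z₁)))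
      = Fterm k z₂ - Fterm k z₁ := by
    intro k
    have := integral_unitInterval_deriv_eq_sub (f := Fterm k)
      (f' := Fterm' k) (z₀ := z₁) (z₁ := z₂ - z₁) (hcontk k)
      (fun t ht => hderivk k _ (hpim t ht))
    rw [add_sub_cancel] at this
    simpa [smul_eq_mul] using this
  set q : ℕ → ℂ := fun k => ∫ t in (0:ℝ)..1, Fterm' k (z₁ + t • (z₂ - z₁)) with hq
  have himq : ∀ k : ℕ, (q k).im ≤ 0 := by
    intro k
    rw [hq]
    simp only
    rw [_root_.intervalIntegral_im ((hcontk k).intervalIntegrable_of_Icc zero_le_one)]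
    have hnn : (0:ℝ) ≤ ∫ t in (0:ℝ)..1, -(Fterm' k (z₁ + t • (z₂ - z₁))).im := by
      apply intervalIntegral.integral_nonneg zero_le_one
      intro t ht
      have hw := hpim t ht
      unfold Fterm'
      rw [show ((k:ℂ) + 1)⁻¹ = ((((k:ℝ)+1)⁻¹ : ℝ) : ℂ) by push_cast; simp]
      rw [Complex.sub_im, Complex.mul_im]
      simp only [Complex.ofReal_re, Complex.ofReal_im, mul_zero, add_zero, sub_zero]
      rw [Complex.inv_im, one_add_div_im]
      simp only [zero_add, neg_neg, neg_div, neg_mul]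
      apply mul_nonneg (div_nonneg (div_nonneg hw.le (by positivity)) (Complex.normSq_nonneg _))
      positivity
    rw [intervalIntegral.integral_neg] at hnn
    linarith
  have hsummF : ∀ z : ℂ, Summable (fun k => Fterm k z) := by
    intro z
    have := summable_lgTerm z
    simpa [Fterm] using this
  have hsq : Summable q := by
    have hqe : q = fun k => (Fterm k z₂ - Fterm k z₁) / (z₂ - z₁) := by
      funext k
      rw [eq_div_iff hD, mul_comm]
      exact hker k
    rw [hqe]
    exact ((hsummF z₂).sub (hsummF z₁)).div_const _
  have htsum : (∑' k : ℕ, Fterm k z₂) - (∑' k : ℕ, Fterm k z₁) = (z₂ - z₁) * ∑' k, q k := by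
    rw [← Summable.tsum_sub (hsummF z₂) (hsummF z₁), ← tsum_mul_left]
    exact tsum_congr fun k => (hker k).symm
  have hdiff : logGamma z₂ - logGamma z₁
      = (z₂ - z₁) * (-(Real.eulerMascheroniConstant : ℂ)
          - (∫ t in (0:ℝ)..1, (z₁ + t • (z₂ - z₁))⁻¹) - ∑' k, q k) := by
    have hlg : ∀ z : ℂ, logGamma z
        = -(Real.eulerMascheroniConstant : ℂ) * z - Complex.log z - ∑' k : ℕ, Fterm k z := by
      intro z
      simp [logGamma, Fterm]
    rw [hlg, hlg]
    linear_combination hI0 - htsum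
  rw [heq, sub_self] at hdiff
  have hC0 : (-(Real.eulerMascheroniConstant : ℂ)
      - (∫ t in (0:ℝ)..1, (z₁ + t • (z₂ - z₁))⁻¹) - ∑' k, q k) = 0 := by
    rcases mul_eq_zero.mp hdiff.symm with h | h
    · exact absurd h hD
    · exact h
  have him : 0 < (-(Real.eulerMascheroniConstant : ℂ)
      - (∫ t in (0:ℝ)..1, (z₁ + t • (z₂ - z₁))⁻¹) - ∑' k, q k).im := by
    rw [Complex.sub_im, Complex.sub_im, Complex.neg_im, Complex.ofReal_im, neg_zero, zero_sub]
    rw [Complex.im_tsum hsq]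
    have hts : ∑' k, (q k).im ≤ 0 := tsum_nonpos himq
    linarith
  rw [hC0] at him
  simp at him

/-- For every integer `k`, the gamma function is injective on
`D_k = { z ∈ ℂ₊ : −(k+1)π < Im L(z) < −kπ }`. -/
theorem gamma_injOn_Dk (k : ℤ) :
    Set.InjOn Complex.Gamma
      {z : ℂ | 0 < z.im ∧ -((k : ℝ) + 1) * Real.pi < (logGamma z).im ∧
        (logGamma z).im < -(k : ℝ) * Real.pi} := by
  rintro z₁ ⟨h1, ha1, hb1⟩ z₂ ⟨h2, ha2, hb2⟩ hG
  apply logGamma_inj h1 h2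
  have he : Complex.exp (logGamma z₁) = Complex.exp (logGamma z₂) := by
    rw [exp_logGamma h1.ne', exp_logGamma h2.ne', hG]
  obtain ⟨n, hn⟩ := Complex.exp_eq_exp_iff_exists_int.mp he
  have him2 : (logGamma z₁).im = (logGamma z₂).im + (n:ℝ) * (2 * Real.pi) := by
    rw [hn]
    simp [Complex.add_im, Complex.mul_im, Complex.mul_re]
  have hπ := Real.pi_pos
  have hn0 : n = 0 := by
    by_contra h
    have h1n : (1:ℝ) ≤ |(n:ℝ)| := by
      have := Int.one_le_abs (show n ≠ 0 from h)
      calc (1:ℝ) ≤ (|n| : ℤ) := by exact_mod_cast this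
        _ = |(n:ℝ)| := by push_cast; ring
    have hb : |(n:ℝ) * (2 * Real.pi)| < Real.pi := by
      rw [abs_lt]
      constructor <;> nlinarith
    rw [abs_mul] at hb
    have : |(2 * Real.pi)| = 2 * Real.pi := abs_of_pos (by linarith)
    rw [this] at hb
    nlinarith
  rw [hn0] at hn
  simpa using hn
end

section
/- The complex sine function, restricted to the open half-strip S = { z ∈ ℂ : −π/2 < Re z < π/2 and Im z > 0 }, is injective, and its image is exactly the open upper half plane: sin(S) = { w ∈ ℂ : Im w > 0 }. -/
open Complex

private lemma root_sub_inv {v w : ℂ} (hv : v ≠ 0) (h : v * (2 * I * w - v) = -1) :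
    v - v⁻¹ = 2 * I * w := by
  field_simp
  linear_combination -h

private lemma root_im {v w : ℂ} (hv : v ≠ 0) (h : v - v⁻¹ = 2 * I * w) :
    w.im = (v.re / Complex.normSq v - v.re) / 2 := by
  have h' := congrArg Complex.re h
  simp only [Complex.sub_re, Complex.inv_re, Complex.mul_re, Complex.mul_im,
    Complex.I_re, Complex.I_im, Complex.ofReal_re, Complex.ofReal_im] at h'
  norm_num at h'
  linarith

/-- The complex sine is injective on the open half-strip
`S = { z : −π/2 < Re z < π/2, Im z > 0 }`, and `sin(S)` is exactly the open upper
half plane. -/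
theorem sin_injOn_halfStrip_and_image :
    Set.InjOn Complex.sin
      {z : ℂ | -(Real.pi / 2) < z.re ∧ z.re < Real.pi / 2 ∧ 0 < z.im} ∧
    Complex.sin '' {z : ℂ | -(Real.pi / 2) < z.re ∧ z.re < Real.pi / 2 ∧ 0 < z.im} =
      {w : ℂ | 0 < w.im} := by
  have hπ : (0:ℝ) < Real.pi := Real.pi_pos
  constructor
  · -- Injectivity
    rintro z₁ ⟨h1l, h1r, h1i⟩ z₂ ⟨h2l, h2r, h2i⟩ h
    have h0 : Complex.sin z₁ - Complex.sin z₂ = 0 := sub_eq_zero.mpr h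
    rw [Complex.sin_sub_sin] at h0
    have h0' : Complex.sin ((z₁ - z₂) / 2) = 0 ∨ Complex.cos ((z₁ + z₂) / 2) = 0 := by
      rcases mul_eq_zero.mp h0 with h' | h'
      · rcases mul_eq_zero.mp h' with h'' | h''
        · norm_num at h''
        · exact Or.inl h''
      · exact Or.inr h'
    rcases h0' with hs | hc
    · obtain ⟨k, hk⟩ := Complex.sin_eq_zero_iff.mp hs
      have hre : (z₁.re - z₂.re) / 2 = (k : ℝ) * Real.pi := by
        have := congrArg Complex.re hk
        simpa using this
      have hk0 : k = 0 := by
        have hb1 : -(Real.pi / 2) < (k : ℝ) * Real.pi := by rw [← hre]; linarith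
        have hb2 : (k : ℝ) * Real.pi < Real.pi / 2 := by rw [← hre]; linarith
        by_contra hne
        rcases lt_or_gt_of_ne hne with hlt | hgt
        · have hk1 : k ≤ -1 := by omega
          have : (k : ℝ) ≤ -1 := by exact_mod_cast hk1
          nlinarith
        · have hk1 : (1 : ℤ) ≤ k := by omega
          have : (1 : ℝ) ≤ (k : ℝ) := by exact_mod_cast hk1
          nlinarith
      rw [hk0] at hk
      push_cast at hk
      have hz : z₁ - z₂ = 0 := by
        have h2 : (z₁ - z₂) / 2 * 2 = 0 * 2 := by rw [hk]; ring
        simpa using h2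
      exact sub_eq_zero.mp hz
    · obtain ⟨k, hk⟩ := Complex.cos_eq_zero_iff.mp hc
      have him : (z₁.im + z₂.im) / 2 = 0 := by
        have := congrArg Complex.im hk
        simpa using this
      linarith
  · -- Image
    ext w
    simp only [Set.mem_image, Set.mem_setOf_eq]
    constructor
    · rintro ⟨z, ⟨hl, hr, hi⟩, rfl⟩
      have hsi : (Complex.sin z).im = Real.cos z.re * Real.sinh z.im := by
        rw [Complex.sin_eq]
        simp [Complex.cos_ofReal_re, Complex.sinh_ofReal_re]
      rw [hsi]
      exact mul_pos (Real.cos_pos_of_mem_Ioo ⟨hl, hr⟩) (Real.sinh_pos_iff.mpr hi)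
    · intro hw
      set c : ℂ := (1 - w ^ 2) ^ (((2 : ℕ) : ℂ)⁻¹) with hcdef
      have hc : c ^ 2 = 1 - w ^ 2 := Complex.cpow_nat_inv_pow _ two_ne_zero
      set u₁ : ℂ := I * w + c with hu₁def
      set u₂ : ℂ := I * w - c with hu₂def
      have hprod : u₁ * u₂ = -1 := by
        rw [hu₁def, hu₂def]
        linear_combination w ^ 2 * Complex.I_sq - hc
      have hu₁ : u₁ ≠ 0 := by
        intro h0; rw [h0, zero_mul] at hprod; norm_num at hprod
      have hu₂ : u₂ ≠ 0 := by
        intro h0; rw [h0, mul_zero] at hprod; norm_num at hprod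
      have habs : ‖u₁‖ * ‖u₂‖ = 1 := by
        rw [← norm_mul, hprod]; simp
      have heq1 : 2 * I * w - u₁ = u₂ := by rw [hu₁def, hu₂def]; ring
      have heq2 : 2 * I * w - u₂ = u₁ := by rw [hu₁def, hu₂def]; ring
      have key : ∀ v : ℂ, v ≠ 0 → v * (2 * I * w - v) = -1 → ‖v‖ < 1 →
          ∃ z, (-(Real.pi / 2) < z.re ∧ z.re < Real.pi / 2 ∧ 0 < z.im) ∧ Complex.sin z = w := by
        intro v hv hveq hvlt
        have hsub := root_sub_inv hv hveq
        have him := root_im hv hsub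
        have hns : 0 < Complex.normSq v := Complex.normSq_pos.mpr hv
        have hns1 : Complex.normSq v < 1 := by
          rw [← Complex.sq_norm]
          nlinarith [norm_nonneg v]
        have hkey2 : 2 * w.im * Complex.normSq v = v.re - v.re * Complex.normSq v := by
          field_simp at him
          linarith
        have hre : 0 < v.re := by nlinarith [mul_pos hw hns]
        have harg : |Complex.arg v| < Real.pi / 2 :=
          Complex.abs_arg_lt_pi_div_two_iff.mpr (Or.inl hre)
        obtain ⟨harg1, harg2⟩ := abs_lt.mp harg
        refine ⟨-I * Complex.log v, ⟨?_, ?_, ?_⟩, ?_⟩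
        · simpa [Complex.log_im] using harg1
        · simpa [Complex.log_im] using harg2
        · have h1 : (-I * Complex.log v).im = -Real.log (‖v‖) := by
            simp [Complex.log_re]
          rw [h1]
          have := Real.log_neg (norm_pos_iff.mpr hv) hvlt
          linarith
        · have hzI : -I * Complex.log v * I = Complex.log v := by
            linear_combination (-(Complex.log v)) * Complex.I_mul_I
          rw [Complex.sin, neg_mul, hzI]
          rw [Complex.exp_neg, Complex.exp_log hv]
          have hvi : v⁻¹ = v - 2 * I * w := by linear_combination -hsub
          rw [hvi]
          linear_combination (-w) * Complex.I_sq
      have habs1 : ‖u₁‖ ≠ 1 := by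
        intro h1
        have hveq : u₁ * (2 * I * w - u₁) = -1 := by rw [heq1]; exact hprod
        have hsub := root_sub_inv hu₁ hveq
        have him := root_im hu₁ hsub
        have hns : Complex.normSq u₁ = 1 := by rw [← Complex.sq_norm, h1]; norm_num
        rw [hns] at him
        simp at him
        linarith
      by_cases hlt : ‖u₁‖ < 1
      · exact key u₁ hu₁ (by rw [heq1]; exact hprod) hlt
      · have hgt : 1 < ‖u₁‖ := lt_of_le_of_ne (not_lt.mp hlt) (Ne.symm habs1)
        have hlt2 : ‖u₂‖ < 1 := by nlinarith [norm_nonneg u₂]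
        exact key u₂ hu₂ (by rw [heq2]; linear_combination hprod) hlt2
end

section
/- Let r ≥ 1 and suppose u > 0 satisfies (log f)″(u) = 0 and (log f)″(x) > 0 for all real x > u. Then: (i) the derivative (log f)′ is injective on the half plane {z : Re z > u} and maps {z : Re z > u, Im z > 0} into ℂ₊; (ii) log f is injective on {z : Re z > u, Im z > 0} and injective on {z : Re z > u, Im z < 0}. -/
open Complex

/-- The entire genus-2 function
`f(z) = z^r e^{az²+bz} ∏_k (1 + z/λ_k) e^{−z/λ_k + z²/(2λ_k²)}`. -/
noncomputable def genus2fun (r : ℕ) (a b : ℝ) (lam : ℕ → ℝ) (z : ℂ) : ℂ :=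
  z ^ r * Complex.exp ((a : ℂ) * z ^ 2 + (b : ℂ) * z) *
    ∏' k : ℕ, ((1 + z / (lam k : ℂ)) *
      Complex.exp (-z / (lam k : ℂ) + z ^ 2 / (2 * (lam k : ℂ) ^ 2)))

/-- The holomorphic branch of `log f` on `ℂ ∖ (−∞,0]`:
`log f(z) = r·Log z + az² + bz + ∑_k (Log(1 + z/λ_k) − z/λ_k + z²/(2λ_k²))`. -/
noncomputable def genus2log (r : ℕ) (a b : ℝ) (lam : ℕ → ℝ) (z : ℂ) : ℂ :=
  (r : ℂ) * Complex.log z + (a : ℂ) * z ^ 2 + (b : ℂ) * z +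
    ∑' k : ℕ, (Complex.log (1 + z / (lam k : ℂ)) - z / (lam k : ℂ) +
      z ^ 2 / (2 * (lam k : ℂ) ^ 2))

noncomputable def g2F (lam : ℕ → ℝ) (k : ℕ) (z : ℂ) : ℂ :=
  Complex.log (1 + z / (lam k : ℂ)) - z / (lam k : ℂ) + z ^ 2 / (2 * (lam k : ℂ) ^ 2)

noncomputable def g2F1 (lam : ℕ → ℝ) (k : ℕ) (z : ℂ) : ℂ :=
  ((lam k : ℂ) + z)⁻¹ - ((lam k : ℂ))⁻¹ + z / (lam k : ℂ) ^ 2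

noncomputable def g2F2 (lam : ℕ → ℝ) (k : ℕ) (z : ℂ) : ℂ :=
  (((lam k : ℂ)) ^ 2)⁻¹ - (((lam k : ℂ) + z) ^ 2)⁻¹

noncomputable def g2G1 (r : ℕ) (a b : ℝ) (lam : ℕ → ℝ) (z : ℂ) : ℂ :=
  (r : ℂ) / z + 2 * (a : ℂ) * z + (b : ℂ) + ∑' k, g2F1 lam k z

noncomputable def g2G2 (r : ℕ) (a : ℝ) (lam : ℕ → ℝ) (z : ℂ) : ℂ :=
  -(r : ℂ) / z ^ 2 + 2 * (a : ℂ) + ∑' k, g2F2 lam k z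

section aux
variable {lam : ℕ → ℝ}

lemma g2_lam_ne (hpos : ∀ k, 0 < lam k) (k : ℕ) : (lam k : ℂ) ≠ 0 :=
  Complex.ofReal_ne_zero.mpr (hpos k).ne'

lemma g2_add_re_pos (hpos : ∀ k, 0 < lam k) {z : ℂ} (hz : 0 < z.re) (k : ℕ) :
    0 < ((lam k : ℂ) + z).re := by
  simp only [Complex.add_re, Complex.ofReal_re]
  linarith [hpos k]

lemma g2_add_ne (hpos : ∀ k, 0 < lam k) {z : ℂ} (hz : 0 < z.re) (k : ℕ) :
    ((lam k : ℂ) + z) ≠ 0 := by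
  intro h
  have := g2_add_re_pos hpos hz k
  rw [h] at this; simp at this

lemma g2_one_add_ne (hpos : ∀ k, 0 < lam k) {z : ℂ} (hz : 0 < z.re) (k : ℕ) :
    1 + z / (lam k : ℂ) ≠ 0 := by
  have h1 : 1 + z / (lam k : ℂ) = ((lam k : ℂ) + z) / (lam k : ℂ) := by
    field_simp [g2_lam_ne hpos k]
  rw [h1]
  exact div_ne_zero (g2_add_ne hpos hz k) (g2_lam_ne hpos k)

lemma g2_one_add_mem (hpos : ∀ k, 0 < lam k) {z : ℂ} (hz : 0 < z.re) (k : ℕ) :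
    1 + z / (lam k : ℂ) ∈ Complex.slitPlane := by
  rw [Complex.mem_slitPlane_iff]
  left
  have : (1 + z / (lam k : ℂ)).re = 1 + z.re / lam k := by
    simp [Complex.add_re, Complex.div_ofReal_re]
  rw [this]
  have := hpos k
  positivity

lemma g2_hasDerivAt_F (hpos : ∀ k, 0 < lam k) {z : ℂ} (hz : 0 < z.re) (k : ℕ) :
    HasDerivAt (g2F lam k) (g2F1 lam k z) z := by
  have h1 : HasDerivAt (fun w : ℂ => 1 + w / (lam k : ℂ)) ((lam k : ℂ))⁻¹ z := by
    simpa [one_div] using ((hasDerivAt_id z).div_const ((lam k : ℂ))).const_add 1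
  have hlog := h1.clog (g2_one_add_mem hpos hz k)
  have h2 : HasDerivAt (fun w : ℂ => w / (lam k : ℂ)) ((lam k : ℂ))⁻¹ z := by
    simpa [one_div] using (hasDerivAt_id z).div_const ((lam k : ℂ))
  have h3 : HasDerivAt (fun w : ℂ => w ^ 2 / (2 * (lam k : ℂ) ^ 2))
      (2 * z / (2 * (lam k : ℂ) ^ 2)) z := by
    simpa [mul_comm] using (hasDerivAt_pow 2 z).div_const (2 * (lam k : ℂ) ^ 2)
  have h := (hlog.sub h2).add h3
  refine h.congr_deriv (Eq.symm ?_)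
  have hL := g2_lam_ne hpos k
  have hne := g2_one_add_ne hpos hz k
  have hLz := g2_add_ne hpos hz k
  unfold g2F1
  field_simp

lemma g2_hasDerivAt_F1 (hpos : ∀ k, 0 < lam k) {z : ℂ} (hz : 0 < z.re) (k : ℕ) :
    HasDerivAt (g2F1 lam k) (g2F2 lam k z) z := by
  have h1 : HasDerivAt (fun w : ℂ => ((lam k : ℂ) + w)⁻¹)
      (-1 / ((lam k : ℂ) + z) ^ 2) z := by
    exact (((hasDerivAt_id z).const_add ((lam k : ℂ))).inv (g2_add_ne hpos hz k)).congr_deriv (by simp)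
  have h2 : HasDerivAt (fun w : ℂ => w / (lam k : ℂ) ^ 2) (((lam k : ℂ)) ^ 2)⁻¹ z := by
    simpa [one_div] using (hasDerivAt_id z).div_const ((lam k : ℂ) ^ 2)
  have h := (h1.sub_const (((lam k : ℂ))⁻¹)).add h2
  refine h.congr_deriv (Eq.symm ?_)
  unfold g2F2
  ring

lemma g2F1_eq (hpos : ∀ k, 0 < lam k) {z : ℂ} (hz : 0 < z.re) (k : ℕ) :
    g2F1 lam k z = z ^ 2 / ((lam k : ℂ) ^ 2 * ((lam k : ℂ) + z)) := by
  have hL := g2_lam_ne hpos k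
  have hLz := g2_add_ne hpos hz k
  unfold g2F1
  field_simp
  ring

lemma g2F2_eq (hpos : ∀ k, 0 < lam k) {z : ℂ} (hz : 0 < z.re) (k : ℕ) :
    g2F2 lam k z = z * (2 * (lam k : ℂ) + z) / ((lam k : ℂ) ^ 2 * ((lam k : ℂ) + z) ^ 2) := by
  have hL := g2_lam_ne hpos k
  have hLz := g2_add_ne hpos hz k
  unfold g2F2
  field_simp
  ring

lemma g2_norm_add (hpos : ∀ k, 0 < lam k) {z : ℂ} (hz : 0 < z.re) (k : ℕ) :
    lam k ≤ ‖(lam k : ℂ) + z‖ := by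
  have h1 : lam k ≤ ((lam k : ℂ) + z).re := by
    simp only [Complex.add_re, Complex.ofReal_re]; linarith
  exact h1.trans (Complex.re_le_norm _)

lemma g2_norm_F1 (hpos : ∀ k, 0 < lam k) {z : ℂ} (hz : 0 < z.re) (k : ℕ) :
    ‖g2F1 lam k z‖ ≤ ‖z‖ ^ 2 * (1 / lam k ^ 3) := by
  rw [g2F1_eq hpos hz k]
  rw [norm_div, norm_mul, norm_pow, norm_pow]
  have hL : ‖(lam k : ℂ)‖ = lam k := by
    rw [Complex.norm_real, Real.norm_eq_abs, abs_of_pos (hpos k)]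
  rw [hL]
  have h2 := g2_norm_add hpos hz k
  have hk := hpos k
  rw [mul_one_div]
  have hLz : (0:ℝ) < ‖(lam k : ℂ) + z‖ := lt_of_lt_of_le hk h2
  rw [div_le_div_iff₀ (by positivity) (by positivity)]
  have : lam k ^ 2 * lam k ≤ lam k ^ 2 * ‖(lam k : ℂ) + z‖ := by nlinarith
  nlinarith [norm_nonneg z, sq_nonneg (‖z‖)]

lemma g2_norm_F2 (hpos : ∀ k, 0 < lam k) (hmono : Monotone lam) {z : ℂ} (hz : 0 < z.re)
    (k : ℕ) : ‖g2F2 lam k z‖ ≤ (2 * ‖z‖ + ‖z‖ ^ 2 / lam 0) * (1 / lam k ^ 3) := by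
  rw [g2F2_eq hpos hz k]
  have hk := hpos k
  have h0 := hpos 0
  have h0k : lam 0 ≤ lam k := hmono (Nat.zero_le k)
  have hL : ‖(lam k : ℂ)‖ = lam k := by
    rw [Complex.norm_real, Real.norm_eq_abs, abs_of_pos hk]
  have h2 := g2_norm_add hpos hz k
  have hnum : ‖z * (2 * (lam k : ℂ) + z)‖ ≤ ‖z‖ * (2 * lam k + ‖z‖) := by
    rw [norm_mul]
    have : ‖2 * (lam k : ℂ) + z‖ ≤ 2 * lam k + ‖z‖ := by
      refine (norm_add_le _ _).trans ?_
      rw [norm_mul, hL]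
      simp [le_refl]
    exact mul_le_mul_of_nonneg_left this (norm_nonneg z)
  have hden : lam k ^ 2 * lam k ^ 2 ≤ ‖(lam k : ℂ) ^ 2 * ((lam k : ℂ) + z) ^ 2‖ := by
    rw [norm_mul, norm_pow, norm_pow, hL]
    have : lam k ^ 2 ≤ ‖(lam k : ℂ) + z‖ ^ 2 := by nlinarith
    nlinarith
  have hdenpos : (0:ℝ) < lam k ^ 2 * lam k ^ 2 := by positivity
  calc ‖z * (2 * (lam k : ℂ) + z) / ((lam k : ℂ) ^ 2 * ((lam k : ℂ) + z) ^ 2)‖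
      = ‖z * (2 * (lam k : ℂ) + z)‖ / ‖(lam k : ℂ) ^ 2 * ((lam k : ℂ) + z) ^ 2‖ := norm_div _ _
    _ ≤ (‖z‖ * (2 * lam k + ‖z‖)) / (lam k ^ 2 * lam k ^ 2) := by
        apply div_le_div₀ (by positivity) hnum hdenpos hden
    _ ≤ (2 * ‖z‖ + ‖z‖ ^ 2 / lam 0) * (1 / lam k ^ 3) := by
        rw [mul_one_div, div_le_div_iff₀ (by positivity) (by positivity)]
        have h1 : ‖z‖ ^ 2 / lam 0 * lam k ≥ ‖z‖ ^ 2 := by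
          rw [ge_iff_le, div_mul_eq_mul_div, le_div_iff₀ h0]
          nlinarith [norm_nonneg z]
        nlinarith [norm_nonneg z, sq_nonneg ‖z‖]

lemma g2_lam_tendsto (hpos : ∀ k, 0 < lam k)
    (hsum : Summable fun k => 1 / lam k ^ 3) :
    Filter.Tendsto lam Filter.atTop Filter.atTop := by
  rw [Filter.tendsto_atTop]
  intro C
  have h0 : Filter.Tendsto (fun k => 1 / lam k ^ 3) Filter.atTop (nhds 0) :=
    hsum.tendsto_atTop_zero
  set D := max C 1 with hD
  have hD1 : (0:ℝ) < D := lt_of_lt_of_le one_pos (le_max_right _ _)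
  have hev : ∀ᶠ k in Filter.atTop, 1 / lam k ^ 3 < 1 / D ^ 3 :=
    h0.eventually_lt_const (by positivity)
  filter_upwards [hev] with k hk
  have hk3 : D ^ 3 < lam k ^ 3 := by
    have := hpos k
    rw [div_lt_div_iff₀ (by positivity) (by positivity)] at hk
    nlinarith
  have : D < lam k := lt_of_pow_lt_pow_left₀ 3 (hpos k).le hk3
  exact le_trans (le_max_left _ _) this.le

lemma g2_logTaylor3 (w : ℂ) : Complex.logTaylor 3 w = w - w ^ 2 / 2 := by
  simp [Complex.logTaylor_succ, Complex.logTaylor_zero]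
  ring

lemma g2_summable_F (hpos : ∀ k, 0 < lam k)
    (hsum : Summable fun k => 1 / lam k ^ 3) (z : ℂ) :
    Summable fun k => g2F lam k z := by
  apply Summable.of_norm_bounded_eventually_nat
    (g := fun k => 2 / 3 * ‖z‖ ^ 3 * (1 / lam k ^ 3)) (hsum.mul_left _)
  have hev := (g2_lam_tendsto hpos hsum).eventually_ge_atTop (2 * ‖z‖ + 1)
  filter_upwards [hev] with k hk
  have hzn : (0:ℝ) ≤ ‖z‖ := norm_nonneg z
  have hkpos := hpos k
  have hLne : (lam k : ℂ) ≠ 0 := Complex.ofReal_ne_zero.mpr hkpos.ne'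
  set w : ℂ := z / (lam k : ℂ) with hw
  have hnw : ‖w‖ = ‖z‖ / lam k := by
    rw [hw, norm_div, Complex.norm_real, Real.norm_eq_abs, abs_of_pos hkpos]
  have hwhalf : ‖w‖ ≤ 1 / 2 := by
    rw [hnw, div_le_div_iff₀ hkpos two_pos]
    linarith
  have hw1 : ‖w‖ < 1 := lt_of_le_of_lt hwhalf (by norm_num)
  have heq : g2F lam k z = Complex.log (1 + w) - Complex.logTaylor 3 w := by
    rw [g2_logTaylor3, g2F, hw]
    have : z ^ 2 / (2 * (lam k : ℂ) ^ 2) = (z / (lam k : ℂ)) ^ 2 / 2 := by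
      rw [div_pow, div_div, mul_comm]
    rw [this]
    ring
  rw [heq]
  have hb := Complex.norm_log_sub_logTaylor_le 2 hw1
  refine hb.trans ?_
  have h1 : (1 - ‖w‖)⁻¹ ≤ 2 := by
    rw [inv_le_comm₀ (by linarith) two_pos]
    linarith
  have h2 : ‖w‖ ^ 3 ≤ ‖z‖ ^ 3 * (1 / lam k ^ 3) := by
    rw [hnw, mul_one_div, div_pow]
  calc ‖w‖ ^ (2+1) * (1 - ‖w‖)⁻¹ / (2+1)
      ≤ ‖w‖ ^ 3 * 2 / 3 := by
        push_cast
        gcongr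
        linarith
      _ ≤ 2 / 3 * ‖z‖ ^ 3 * (1 / lam k ^ 3) := by nlinarith [pow_nonneg hzn 3, pow_pos hkpos 3]

lemma g2_summable_F1 (hpos : ∀ k, 0 < lam k)
    (hsum : Summable fun k => 1 / lam k ^ 3) {z : ℂ} (hz : 0 < z.re) :
    Summable fun k => g2F1 lam k z :=
  Summable.of_norm_bounded (hsum.mul_left (‖z‖ ^ 2)) (fun k => g2_norm_F1 hpos hz k)

lemma g2_summable_F2 (hpos : ∀ k, 0 < lam k) (hmono : Monotone lam)
    (hsum : Summable fun k => 1 / lam k ^ 3) {z : ℂ} (hz : 0 < z.re) :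
    Summable fun k => g2F2 lam k z :=
  Summable.of_norm_bounded (hsum.mul_left (2 * ‖z‖ + ‖z‖ ^ 2 / lam 0))
    (fun k => g2_norm_F2 hpos hmono hz k)

lemma g2_hasDerivAt_S1 (hpos : ∀ k, 0 < lam k)
    (hsum : Summable fun k => 1 / lam k ^ 3) {z : ℂ} (hz : 0 < z.re) :
    HasDerivAt (fun w => ∑' k, g2F lam k w) (∑' k, g2F1 lam k z) z := by
  set t : Set ℂ := Metric.ball (0:ℂ) (‖z‖ + 1) ∩ {w | 0 < w.re} with ht
  have htopen : IsOpen t := Metric.isOpen_ball.inter (isOpen_lt continuous_const Complex.continuous_re)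
  have htconn : IsPreconnected t :=
    ((convex_ball (0:ℂ) (‖z‖+1)).inter (convex_halfSpace_re_gt 0)).isPreconnected
  have hzt : z ∈ t := by
    constructor
    · simp [Metric.mem_ball, dist_zero_right]
    · exact hz
  apply hasDerivAt_tsum_of_isPreconnected (hsum.mul_left ((‖z‖+1) ^ 2)) htopen htconn
    (fun k w hw => g2_hasDerivAt_F hpos hw.2 k) ?_ hzt (g2_summable_F hpos hsum z) hzt
  intro k w hw
  refine (g2_norm_F1 hpos hw.2 k).trans ?_
  have hwn : ‖w‖ ≤ ‖z‖ + 1 := by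
    have := hw.1
    rw [Metric.mem_ball, dist_zero_right] at this
    linarith
  have hk := hpos k
  gcongr

lemma g2_hasDerivAt_S2 (hpos : ∀ k, 0 < lam k) (hmono : Monotone lam)
    (hsum : Summable fun k => 1 / lam k ^ 3) {z : ℂ} (hz : 0 < z.re) :
    HasDerivAt (fun w => ∑' k, g2F1 lam k w) (∑' k, g2F2 lam k z) z := by
  set t : Set ℂ := Metric.ball (0:ℂ) (‖z‖ + 1) ∩ {w | 0 < w.re} with ht
  have htopen : IsOpen t := Metric.isOpen_ball.inter (isOpen_lt continuous_const Complex.continuous_re)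
  have htconn : IsPreconnected t :=
    ((convex_ball (0:ℂ) (‖z‖+1)).inter (convex_halfSpace_re_gt 0)).isPreconnected
  have hzt : z ∈ t := by
    constructor
    · simp [Metric.mem_ball, dist_zero_right]
    · exact hz
  apply hasDerivAt_tsum_of_isPreconnected
    (hsum.mul_left (2 * (‖z‖+1) + (‖z‖+1) ^ 2 / lam 0)) htopen htconn
    (fun k w hw => g2_hasDerivAt_F1 hpos hw.2 k) ?_ hzt (g2_summable_F1 hpos hsum hz) hzt
  intro k w hw
  refine (g2_norm_F2 hpos hmono hw.2 k).trans ?_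
  have hwn : ‖w‖ ≤ ‖z‖ + 1 := by
    have := hw.1
    rw [Metric.mem_ball, dist_zero_right] at this
    linarith
  have hk := hpos k
  have h0 := hpos 0
  gcongr

end aux
section aux2
variable {lam : ℕ → ℝ}

lemma genus2log_eq (r : ℕ) (a b : ℝ) (lam : ℕ → ℝ) :
    genus2log r a b lam = fun z => (r : ℂ) * Complex.log z + (a : ℂ) * z ^ 2 + (b : ℂ) * z +
      ∑' k, g2F lam k z := rfl

lemma g2_hasDerivAt_G (hpos : ∀ k, 0 < lam k)
    (hsum : Summable fun k => 1 / lam k ^ 3) (r : ℕ) (a b : ℝ) {z : ℂ} (hz : 0 < z.re) :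
    HasDerivAt (genus2log r a b lam) (g2G1 r a b lam z) z := by
  rw [genus2log_eq]
  have hzslit : z ∈ Complex.slitPlane := Complex.mem_slitPlane_iff.mpr (Or.inl hz)
  have h1 : HasDerivAt (fun w : ℂ => (r : ℂ) * Complex.log w) ((r : ℂ) * z⁻¹) z :=
    (Complex.hasDerivAt_log hzslit).const_mul _
  have h2 : HasDerivAt (fun w : ℂ => (a : ℂ) * w ^ 2) ((a : ℂ) * (2 * z ^ 1)) z :=
    (hasDerivAt_pow 2 z).const_mul _
  have h3 : HasDerivAt (fun w : ℂ => (b : ℂ) * w) ((b : ℂ) * 1) z :=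
    (hasDerivAt_id z).const_mul _
  have h := ((h1.add h2).add h3).add (g2_hasDerivAt_S1 hpos hsum hz)
  refine h.congr_deriv (Eq.symm ?_)
  unfold g2G1
  rw [div_eq_mul_inv]
  ring

lemma g2_hasDerivAt_G1 (hpos : ∀ k, 0 < lam k) (hmono : Monotone lam)
    (hsum : Summable fun k => 1 / lam k ^ 3) (r : ℕ) (a b : ℝ) {z : ℂ} (hz : 0 < z.re) :
    HasDerivAt (g2G1 r a b lam) (g2G2 r a lam z) z := by
  have hzne : z ≠ 0 := by
    intro h; rw [h] at hz; simp at hz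
  have h1 : HasDerivAt (fun w : ℂ => (r : ℂ) / w)
      ((0 * z - (r : ℂ) * 1) / z ^ 2) z :=
    (hasDerivAt_const z ((r : ℂ))).div (hasDerivAt_id z) hzne
  have h2 : HasDerivAt (fun w : ℂ => 2 * (a : ℂ) * w) (2 * (a : ℂ) * 1) z :=
    (hasDerivAt_id z).const_mul _
  have h3 : HasDerivAt (fun w : ℂ => (b : ℂ)) 0 z := hasDerivAt_const z _
  have h := ((h1.add h2).add h3).add (g2_hasDerivAt_S2 hpos hmono hsum hz)
  have hfun : g2G1 r a b lam = fun w =>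
      (r : ℂ) / w + 2 * (a : ℂ) * w + (b : ℂ) + ∑' k, g2F1 lam k w := rfl
  rw [hfun]
  refine h.congr_deriv (Eq.symm ?_)
  unfold g2G2
  ring

lemma g2_deriv_eq (hpos : ∀ k, 0 < lam k)
    (hsum : Summable fun k => 1 / lam k ^ 3) (r : ℕ) (a b : ℝ) {z : ℂ} (hz : 0 < z.re) :
    deriv (genus2log r a b lam) z = g2G1 r a b lam z :=
  (g2_hasDerivAt_G hpos hsum r a b hz).deriv

lemma g2_iter2 (hpos : ∀ k, 0 < lam k) (hmono : Monotone lam)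
    (hsum : Summable fun k => 1 / lam k ^ 3) (r : ℕ) (a b : ℝ) {z : ℂ} (hz : 0 < z.re) :
    iteratedDeriv 2 (genus2log r a b lam) z = g2G2 r a lam z := by
  rw [show (2:ℕ) = 1 + 1 from rfl, iteratedDeriv_succ, iteratedDeriv_one]
  have hev : deriv (genus2log r a b lam) =ᶠ[nhds z] g2G1 r a b lam := by
    have hopen : IsOpen {w : ℂ | 0 < w.re} := isOpen_lt continuous_const Complex.continuous_re
    filter_upwards [hopen.mem_nhds hz] with w hw
    exact g2_deriv_eq hpos hsum r a b hw
  rw [hev.deriv_eq]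
  exact (g2_hasDerivAt_G1 hpos hmono hsum r a b hz).deriv

lemma g2_contG1 (hpos : ∀ k, 0 < lam k) (hmono : Monotone lam)
    (hsum : Summable fun k => 1 / lam k ^ 3) (r : ℕ) (a b : ℝ) :
    ContinuousOn (g2G1 r a b lam) {w : ℂ | 0 < w.re} := fun z hz =>
  (g2_hasDerivAt_G1 hpos hmono hsum r a b hz).continuousAt.continuousWithinAt

lemma g2_contG2 (hpos : ∀ k, 0 < lam k) (hmono : Monotone lam)
    (hsum : Summable fun k => 1 / lam k ^ 3) (r : ℕ) (a b : ℝ) :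
    ContinuousOn (g2G2 r a lam) {w : ℂ | 0 < w.re} := by
  have hopen : IsOpen {w : ℂ | 0 < w.re} := isOpen_lt continuous_const Complex.continuous_re
  have hdiff : DifferentiableOn ℂ (g2G1 r a b lam) {w : ℂ | 0 < w.re} := fun z hz =>
    (g2_hasDerivAt_G1 hpos hmono hsum r a b hz).differentiableAt.differentiableWithinAt
  have han : AnalyticOnNhd ℂ (g2G1 r a b lam) {w : ℂ | 0 < w.re} :=
    hdiff.analyticOnNhd hopen
  have hcd : ContinuousOn (deriv (g2G1 r a b lam)) {w : ℂ | 0 < w.re} :=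
    han.deriv.continuousOn
  exact hcd.congr (fun z hz => ((g2_hasDerivAt_G1 hpos hmono hsum r a b hz).deriv).symm)

end aux2
section aux3
variable {lam : ℕ → ℝ}

lemma g2_re_inv_sq_le {w : ℂ} (hw : 0 < w.re) : ((w ^ 2)⁻¹).re ≤ (w.re ^ 2)⁻¹ := by
  have h1 : (w ^ 2).re = w.re ^ 2 - w.im ^ 2 := by
    rw [pow_two, Complex.mul_re]; ring
  have h2 : Complex.normSq (w ^ 2) = (w.re ^ 2 + w.im ^ 2) ^ 2 := by
    rw [map_pow, Complex.normSq_apply]; ring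
  have hp0 : (0:ℝ) < w.re ^ 2 + w.im ^ 2 := by nlinarith [sq_nonneg w.im]
  have hp1 : (0:ℝ) < (w.re ^ 2 + w.im ^ 2) ^ 2 := pow_pos hp0 2
  have hp2 : (0:ℝ) < w.re ^ 2 := by positivity
  rw [Complex.inv_re, h1, h2, inv_eq_one_div, div_le_div_iff₀ hp1 hp2]
  nlinarith [sq_nonneg w.im, sq_nonneg (w.re * w.im)]

lemma g2_im_inv_ge {w : ℂ} (hw : 0 < w.re) (hy : 0 ≤ w.im) :
    -w.im / w.re ^ 2 ≤ (w⁻¹).im := by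
  have hp1 : (0:ℝ) < w.re ^ 2 := by positivity
  have hp2 : (0:ℝ) < w.re * w.re + w.im * w.im := by nlinarith
  rw [Complex.inv_im, Complex.normSq_apply, div_le_div_iff₀ hp1 hp2]
  nlinarith [sq_nonneg w.im]

lemma g2_im_inv_le {w : ℂ} (hw : 0 < w.re) (hy : w.im ≤ 0) :
    (w⁻¹).im ≤ -w.im / w.re ^ 2 := by
  have hp1 : (0:ℝ) < w.re ^ 2 := by positivity
  have hp2 : (0:ℝ) < w.re * w.re + w.im * w.im := by nlinarith
  rw [Complex.inv_im, Complex.normSq_apply, div_le_div_iff₀ hp2 hp1]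
  nlinarith [sq_nonneg w.im]

lemma g2_summable_re {f : ℕ → ℂ} (h : Summable f) : Summable fun k => (f k).re := by
  simpa using (Complex.hasSum_re h.hasSum).summable

lemma g2_summable_im {f : ℕ → ℂ} (h : Summable f) : Summable fun k => (f k).im := by
  simpa using (Complex.hasSum_im h.hasSum).summable

lemma g2_tsum_re {f : ℕ → ℂ} (h : Summable f) : (∑' k, f k).re = ∑' k, (f k).re := by
  simpa using Complex.reCLM.map_tsum h

lemma g2_tsum_im {f : ℕ → ℂ} (h : Summable f) : (∑' k, f k).im = ∑' k, (f k).im := by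
  simpa using Complex.imCLM.map_tsum h

lemma g2_reF2_real (hpos : ∀ k, 0 < lam k) (x : ℝ) (k : ℕ) :
    (g2F2 lam k ((x : ℝ) : ℂ)).re = (lam k ^ 2)⁻¹ - ((lam k + x) ^ 2)⁻¹ := by
  unfold g2F2
  rw [← Complex.ofReal_add, ← Complex.ofReal_pow, ← Complex.ofReal_pow,
    ← Complex.ofReal_inv, ← Complex.ofReal_inv, ← Complex.ofReal_sub, Complex.ofReal_re]

lemma g2_reF2_le (hpos : ∀ k, 0 < lam k) {z : ℂ} (hz : 0 < z.re) (k : ℕ) :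
    (g2F2 lam k ((z.re : ℝ) : ℂ)).re ≤ (g2F2 lam k z).re := by
  rw [g2_reF2_real hpos]
  have h1 : (g2F2 lam k z).re = (lam k ^ 2)⁻¹ - (((lam k : ℂ) + z) ^ 2)⁻¹.re := by
    unfold g2F2
    rw [Complex.sub_re, ← Complex.ofReal_pow, ← Complex.ofReal_inv, Complex.ofReal_re]
  rw [h1]
  have h2 := g2_re_inv_sq_le (g2_add_re_pos hpos hz k)
  have h3 : ((lam k : ℂ) + z).re = lam k + z.re := by
    simp [Complex.add_re]
  rw [h3] at h2
  linarith

lemma g2_first_re (r : ℕ) (z : ℂ) :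
    (-(r : ℂ) / z ^ 2).re = -((r : ℝ) * ((z ^ 2)⁻¹).re) := by
  rw [show ((r : ℕ) : ℂ) = ((r : ℝ) : ℂ) from by norm_cast]
  rw [neg_div, Complex.neg_re, div_eq_mul_inv, Complex.re_ofReal_mul]

lemma g2_first_re_real (r : ℕ) (x : ℝ) :
    (-(r : ℂ) / ((x : ℝ) : ℂ) ^ 2).re = -((r : ℝ) / x ^ 2) := by
  rw [show -(r : ℂ) / ((x : ℝ) : ℂ) ^ 2 = (((-((r : ℝ) / x ^ 2)) : ℝ) : ℂ) from by
    push_cast; ring]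
  rw [Complex.ofReal_re]

lemma g2_keyA (hpos : ∀ k, 0 < lam k) (hmono : Monotone lam)
    (hsum : Summable fun k => 1 / lam k ^ 3) (r : ℕ) (a : ℝ) {z : ℂ} (hz : 0 < z.re) :
    (g2G2 r a lam ((z.re : ℝ) : ℂ)).re ≤ (g2G2 r a lam z).re := by
  have hx : (0:ℝ) < (((z.re : ℝ) : ℂ)).re := by simpa using hz
  unfold g2G2
  rw [Complex.add_re, Complex.add_re, Complex.add_re, Complex.add_re,
    g2_tsum_re (g2_summable_F2 hpos hmono hsum hz),
    g2_tsum_re (g2_summable_F2 hpos hmono hsum hx)]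
  have hfirst : (-(r : ℂ) / ((z.re : ℝ) : ℂ) ^ 2).re ≤ (-(r : ℂ) / z ^ 2).re := by
    rw [g2_first_re_real, g2_first_re]
    have h2 := g2_re_inv_sq_le hz
    have hr : (0:ℝ) ≤ (r : ℝ) := Nat.cast_nonneg r
    have h3 : (r:ℝ) * ((z ^ 2)⁻¹).re ≤ (r:ℝ) * (z.re ^ 2)⁻¹ :=
      mul_le_mul_of_nonneg_left h2 hr
    have h4 : (r:ℝ) / z.re ^ 2 = (r:ℝ) * (z.re ^ 2)⁻¹ := by ring
    linarith
  refine add_le_add (add_le_add hfirst (le_refl _)) ?_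
  exact Summable.tsum_le_tsum (fun k => g2_reF2_le hpos hz k)
    (g2_summable_re (g2_summable_F2 hpos hmono hsum hx))
    (g2_summable_re (g2_summable_F2 hpos hmono hsum hz))

end aux3
section aux4
variable {lam : ℕ → ℝ}

lemma g2_imF1 (hpos : ∀ k, 0 < lam k) {z : ℂ} (hz : 0 < z.re) (k : ℕ) :
    (g2F1 lam k z).im = (((lam k : ℂ) + z)⁻¹).im + z.im / lam k ^ 2 := by
  unfold g2F1
  rw [Complex.add_im, Complex.sub_im]
  have h1 : (((lam k : ℂ))⁻¹).im = 0 := by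
    rw [← Complex.ofReal_inv, Complex.ofReal_im]
  have h2 : (z / (lam k : ℂ) ^ 2).im = z.im / lam k ^ 2 := by
    rw [← Complex.ofReal_pow, Complex.div_ofReal_im]
  rw [h1, h2]
  ring

lemma g2_imG1 (hpos : ∀ k, 0 < lam k)
    (hsum : Summable fun k => 1 / lam k ^ 3) (r : ℕ) (a b : ℝ) {z : ℂ} (hz : 0 < z.re) :
    (g2G1 r a b lam z).im = ((r : ℂ) / z).im + 2 * a * z.im + ∑' k, (g2F1 lam k z).im := by
  unfold g2G1
  rw [Complex.add_im, Complex.add_im, Complex.add_im,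
    g2_tsum_im (g2_summable_F1 hpos hsum hz)]
  have h1 : (2 * (a : ℂ) * z).im = 2 * a * z.im := by
    rw [show 2 * (a : ℂ) = (((2 * a : ℝ)) : ℂ) from by push_cast; ring,
      Complex.im_ofReal_mul]
  rw [h1, Complex.ofReal_im]
  ring

lemma g2_reG2_real (hpos : ∀ k, 0 < lam k) (hmono : Monotone lam)
    (hsum : Summable fun k => 1 / lam k ^ 3) (r : ℕ) (a : ℝ) {x : ℝ} (hx : 0 < x) :
    (g2G2 r a lam ((x : ℝ) : ℂ)).re
      = -((r : ℝ) / x ^ 2) + 2 * a + ∑' k, (g2F2 lam k ((x : ℝ) : ℂ)).re := by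
  have hx0 : (0:ℝ) < (((x : ℝ) : ℂ)).re := by simpa using hx
  unfold g2G2
  rw [Complex.add_re, Complex.add_re, g2_tsum_re (g2_summable_F2 hpos hmono hsum hx0),
    g2_first_re_real]
  have h1 : (2 * (a : ℂ)).re = 2 * a := by
    rw [show 2 * (a : ℂ) = (((2 * a : ℝ)) : ℂ) from by push_cast; ring, Complex.ofReal_re]
  rw [h1]

lemma g2_keyB (hpos : ∀ k, 0 < lam k) (hmono : Monotone lam)
    (hsum : Summable fun k => 1 / lam k ^ 3) (r : ℕ) (a b : ℝ) {z : ℂ}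
    (hz : 0 < z.re) (hy : 0 ≤ z.im) :
    z.im * (g2G2 r a lam ((z.re : ℝ) : ℂ)).re ≤ (g2G1 r a b lam z).im := by
  have hx0 : (0:ℝ) < (((z.re : ℝ) : ℂ)).re := by simpa using hz
  rw [g2_imG1 hpos hsum r a b hz, g2_reG2_real hpos hmono hsum r a hz, mul_add, mul_add]
  have hterm1 : z.im * -((r:ℝ) / z.re ^ 2) ≤ ((r : ℂ) / z).im := by
    have him : ((r : ℂ) / z).im = (r : ℝ) * (z⁻¹).im := by
      rw [show ((r : ℕ) : ℂ) = ((r : ℝ) : ℂ) from by norm_cast, div_eq_mul_inv,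
        Complex.im_ofReal_mul]
    rw [him]
    have h2 := g2_im_inv_ge hz hy
    have hr : (0:ℝ) ≤ (r : ℝ) := Nat.cast_nonneg r
    have h3 := mul_le_mul_of_nonneg_left h2 hr
    have h4 : z.im * -((r:ℝ) / z.re ^ 2) = (r:ℝ) * (-z.im / z.re ^ 2) := by ring
    linarith
  have hterm3 : z.im * ∑' k, (g2F2 lam k ((z.re : ℝ) : ℂ)).re
      ≤ ∑' k, (g2F1 lam k z).im := by
    rw [← tsum_mul_left]
    refine Summable.tsum_le_tsum ?_
      ((g2_summable_re (g2_summable_F2 hpos hmono hsum hx0)).mul_left z.im)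
      (g2_summable_im (g2_summable_F1 hpos hsum hz))
    intro k
    rw [g2_reF2_real hpos, g2_imF1 hpos hz k]
    have hyk : 0 ≤ ((lam k : ℂ) + z).im := by simpa [Complex.add_im] using hy
    have h5 := g2_im_inv_ge (g2_add_re_pos hpos hz k) hyk
    have h6 : ((lam k : ℂ) + z).im = z.im := by simp [Complex.add_im]
    have h7 : ((lam k : ℂ) + z).re = lam k + z.re := by simp [Complex.add_re]
    rw [h6, h7] at h5
    have e1 : z.im * ((lam k ^ 2)⁻¹ - ((lam k + z.re) ^ 2)⁻¹)
        = z.im / lam k ^ 2 - z.im / (lam k + z.re) ^ 2 := by ring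
    have e2 : -z.im / (lam k + z.re) ^ 2 = -(z.im / (lam k + z.re) ^ 2) := by ring
    linarith
  linarith

lemma g2_keyB' (hpos : ∀ k, 0 < lam k) (hmono : Monotone lam)
    (hsum : Summable fun k => 1 / lam k ^ 3) (r : ℕ) (a b : ℝ) {z : ℂ}
    (hz : 0 < z.re) (hy : z.im ≤ 0) :
    (g2G1 r a b lam z).im ≤ z.im * (g2G2 r a lam ((z.re : ℝ) : ℂ)).re := by
  have hx0 : (0:ℝ) < (((z.re : ℝ) : ℂ)).re := by simpa using hz
  rw [g2_imG1 hpos hsum r a b hz, g2_reG2_real hpos hmono hsum r a hz, mul_add, mul_add]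
  have hterm1 : ((r : ℂ) / z).im ≤ z.im * -((r:ℝ) / z.re ^ 2) := by
    have him : ((r : ℂ) / z).im = (r : ℝ) * (z⁻¹).im := by
      rw [show ((r : ℕ) : ℂ) = ((r : ℝ) : ℂ) from by norm_cast, div_eq_mul_inv,
        Complex.im_ofReal_mul]
    rw [him]
    have h2 := g2_im_inv_le hz hy
    have hr : (0:ℝ) ≤ (r : ℝ) := Nat.cast_nonneg r
    have h3 := mul_le_mul_of_nonneg_left h2 hr
    have h4 : z.im * -((r:ℝ) / z.re ^ 2) = (r:ℝ) * (-z.im / z.re ^ 2) := by ring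
    linarith
  have hterm3 : ∑' k, (g2F1 lam k z).im
      ≤ z.im * ∑' k, (g2F2 lam k ((z.re : ℝ) : ℂ)).re := by
    rw [← tsum_mul_left]
    refine Summable.tsum_le_tsum ?_
      (g2_summable_im (g2_summable_F1 hpos hsum hz))
      ((g2_summable_re (g2_summable_F2 hpos hmono hsum hx0)).mul_left z.im)
    intro k
    rw [g2_reF2_real hpos, g2_imF1 hpos hz k]
    have hyk : ((lam k : ℂ) + z).im ≤ 0 := by simpa [Complex.add_im] using hy
    have h5 := g2_im_inv_le (g2_add_re_pos hpos hz k) hyk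
    have h6 : ((lam k : ℂ) + z).im = z.im := by simp [Complex.add_im]
    have h7 : ((lam k : ℂ) + z).re = lam k + z.re := by simp [Complex.add_re]
    rw [h6, h7] at h5
    have e1 : z.im * ((lam k ^ 2)⁻¹ - ((lam k + z.re) ^ 2)⁻¹)
        = z.im / lam k ^ 2 - z.im / (lam k + z.re) ^ 2 := by ring
    have e2 : -z.im / (lam k + z.re) ^ 2 = -(z.im / (lam k + z.re) ^ 2) := by ring
    linarith
  linarith

end aux4
section engine

open MeasureTheory intervalIntegral

lemma g2_inj_aux (φ : ℂ →L[ℝ] ℝ) {f g : ℂ → ℂ} {s : Set ℂ} (hconv : Convex ℝ s)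
    (hf : ∀ z ∈ s, HasDerivAt f (g z) z) (hg : ContinuousOn g s)
    (hpos : ∀ z ∈ s, 0 < φ (g z)) : Set.InjOn f s := by
  intro p hp q hq hpq
  by_contra hne
  set w : ℂ := q - p with hwdef
  have hw : w ≠ 0 := sub_ne_zero.mpr (Ne.symm hne)
  have hγs : ∀ t : ℝ, t ∈ Set.uIcc (0:ℝ) 1 → p + (t : ℂ) * w ∈ s := by
    intro t ht
    rw [Set.uIcc_of_le zero_le_one] at ht
    have h := hconv hp hq (by linarith [ht.2] : (0:ℝ) ≤ 1 - t) ht.1 (by ring)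
    have he : (1 - t) • p + t • q = p + (t : ℂ) * w := by
      rw [hwdef]
      simp only [Complex.real_smul]
      push_cast
      ring
    rwa [he] at h
  have hcontγ : Continuous fun t : ℝ => p + (t : ℂ) * w :=
    continuous_const.add (Complex.continuous_ofReal.mul continuous_const)
  have hgγ : ContinuousOn (fun t : ℝ => g (p + (t : ℂ) * w)) (Set.uIcc 0 1) :=
    hg.comp hcontγ.continuousOn hγs
  have hderiv : ∀ t ∈ Set.uIcc (0:ℝ) 1,
      HasDerivAt (fun t : ℝ => f (p + (t : ℂ) * w)) (g (p + (t : ℂ) * w) * w) t := by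
    intro t ht
    have hin : HasDerivAt (fun s : ℂ => p + s * w) w (t : ℂ) := by
      simpa using ((hasDerivAt_id ((t : ℂ))).mul_const w).const_add p
    have hout := hf _ (hγs t ht)
    exact (hout.comp (t : ℂ) hin).comp_ofReal
  have hint : IntervalIntegrable (fun t : ℝ => g (p + (t : ℂ) * w) * w) volume 0 1 :=
    (hgγ.mul continuousOn_const).intervalIntegrable
  have hFTC := intervalIntegral.integral_eq_sub_of_hasDerivAt hderiv hint
  have hγ0 : p + ((0:ℝ) : ℂ) * w = p := by simp
  have hγ1 : p + ((1:ℝ) : ℂ) * w = q := by rw [hwdef]; push_cast; ring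
  rw [hγ0, hγ1, hpq, sub_self] at hFTC
  have hint2 : IntervalIntegrable (fun t : ℝ => g (p + (t : ℂ) * w)) volume 0 1 :=
    hgγ.intervalIntegrable
  have hzero : (∫ t in (0:ℝ)..1, g (p + (t : ℂ) * w)) = 0 := by
    rw [intervalIntegral.integral_mul_const] at hFTC
    exact (mul_eq_zero.mp hFTC).resolve_right hw
  have hposint : 0 < ∫ t in (0:ℝ)..1, φ (g (p + (t : ℂ) * w)) := by
    apply intervalIntegral_pos_of_pos_on
    · exact (φ.continuous.comp_continuousOn hgγ).intervalIntegrable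
    · intro t ht
      exact hpos _ (hγs t (by
        rw [Set.uIcc_of_le zero_le_one]
        exact ⟨ht.1.le, ht.2.le⟩))
    · exact one_pos
  have hcomm : (∫ t in (0:ℝ)..1, φ (g (p + (t : ℂ) * w)))
      = φ (∫ t in (0:ℝ)..1, g (p + (t : ℂ) * w)) :=
    φ.intervalIntegral_comp_comm hint2
  rw [hcomm, hzero, map_zero] at hposint
  exact lt_irrefl _ hposint

end engine

/-- Let `r ≥ 1` and `u > 0` with `(log f)″(u) = 0` and
`(log f)″(x) > 0` for real `x > u`.  Then (i) `(log f)′` is injective on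
`{Re z > u}` and maps `{Re z > u} ∩ ℂ₊` into `ℂ₊`; (ii) `log f` is injective on
`{Re z > u} ∩ ℂ₊` and on `{Re z > u} ∩ ℂ₋`. -/
theorem genus2_conformal (r : ℕ) (hr : 1 ≤ r) (a b : ℝ) (lam : ℕ → ℝ)
    (hpos : ∀ k, 0 < lam k) (hmono : Monotone lam)
    (hdiv : ¬ Summable (fun k => 1 / lam k ^ 2))
    (hsum : Summable (fun k => 1 / lam k ^ 3))
    (u : ℝ) (hu : 0 < u)
    (hu2 : iteratedDeriv 2 (genus2log r a b lam) (u : ℂ) = 0)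
    (hconv : ∀ x : ℝ, u < x → 0 < (iteratedDeriv 2 (genus2log r a b lam) (x : ℂ)).re) :
    (Set.InjOn (deriv (genus2log r a b lam)) {z : ℂ | u < z.re} ∧
      Set.MapsTo (deriv (genus2log r a b lam))
        {z : ℂ | u < z.re ∧ 0 < z.im} {z : ℂ | 0 < z.im}) ∧
    (Set.InjOn (genus2log r a b lam) {z : ℂ | u < z.re ∧ 0 < z.im} ∧
      Set.InjOn (genus2log r a b lam) {z : ℂ | u < z.re ∧ z.im < 0}) := by
  have hG2posR : ∀ x : ℝ, u < x → 0 < (g2G2 r a lam ((x : ℝ) : ℂ)).re := by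
    intro x hx
    have h0 : (0:ℝ) < (((x : ℝ) : ℂ)).re := by simpa using hu.trans hx
    have := hconv x hx
    rwa [g2_iter2 hpos hmono hsum r a b h0] at this
  have hrepos : ∀ z : ℂ, u < z.re → 0 < (g2G2 r a lam z).re := fun z hz =>
    lt_of_lt_of_le (hG2posR z.re hz) (g2_keyA hpos hmono hsum r a (hu.trans hz))
  have himpos : ∀ z : ℂ, u < z.re → 0 < z.im → 0 < (g2G1 r a b lam z).im := fun z hz hy =>
    lt_of_lt_of_le (mul_pos hy (hG2posR z.re hz))
      (g2_keyB hpos hmono hsum r a b (hu.trans hz) hy.le)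
  have himneg : ∀ z : ℂ, u < z.re → z.im < 0 → (g2G1 r a b lam z).im < 0 := fun z hz hy =>
    lt_of_le_of_lt (g2_keyB' hpos hmono hsum r a b (hu.trans hz) hy.le)
      (mul_neg_of_neg_of_pos hy (hG2posR z.re hz))
  have hsub1 : {z : ℂ | u < z.re} ⊆ {z : ℂ | 0 < z.re} := fun z hz => hu.trans hz
  have hconv1 : Convex ℝ {z : ℂ | u < z.re} := convex_halfSpace_re_gt u
  constructor
  · constructor
    · -- injectivity of the derivative
      have hinj : Set.InjOn (g2G1 r a b lam) {z : ℂ | u < z.re} := by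
        apply g2_inj_aux Complex.reCLM hconv1
          (fun z hz => g2_hasDerivAt_G1 hpos hmono hsum r a b (hu.trans hz))
          ((g2_contG2 hpos hmono hsum r a b).mono hsub1)
        intro z hz
        simpa using hrepos z hz
      intro z1 h1 z2 h2 heq
      apply hinj h1 h2
      rw [← g2_deriv_eq hpos hsum r a b (hu.trans h1),
        ← g2_deriv_eq hpos hsum r a b (hu.trans h2)]
      exact heq
    · intro z hz
      have h0 : 0 < z.re := hu.trans hz.1
      show 0 < (deriv (genus2log r a b lam) z).im
      rw [g2_deriv_eq hpos hsum r a b h0]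
      exact himpos z hz.1 hz.2
  · have hset1 : {z : ℂ | u < z.re ∧ 0 < z.im}
        = {z : ℂ | u < z.re} ∩ {z : ℂ | 0 < z.im} := by
      ext z; simp [Set.mem_inter_iff, Set.mem_setOf_eq]
    have hset2 : {z : ℂ | u < z.re ∧ z.im < 0}
        = {z : ℂ | u < z.re} ∩ {z : ℂ | z.im < 0} := by
      ext z; simp [Set.mem_inter_iff, Set.mem_setOf_eq]
    constructor
    · apply g2_inj_aux Complex.imCLM
        (by rw [hset1]; exact hconv1.inter (convex_halfSpace_im_gt 0))
        (fun z hz => g2_hasDerivAt_G hpos hsum r a b (hu.trans hz.1))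
        ((g2_contG1 hpos hmono hsum r a b).mono (fun z hz => hu.trans hz.1))
      intro z hz
      simpa using himpos z hz.1 hz.2
    · apply g2_inj_aux (-Complex.imCLM)
        (by rw [hset2]; exact hconv1.inter (convex_halfSpace_im_lt 0))
        (fun z hz => g2_hasDerivAt_G hpos hsum r a b (hu.trans hz.1))
        ((g2_contG1 hpos hmono hsum r a b).mono (fun z hz => hu.trans hz.1))
      intro z hz
      have := himneg z hz.1 hz.2
      simp only [ContinuousLinearMap.neg_apply, Complex.imCLM_apply]
      linarith
end
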